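/- Let G be a Lie group with Lie algebra g, μ = (μ₁,…,μ_k) ∈ (g*)^k, and let O_μ be the k-coadjoint orbit of μ under Coad^k. For each A, let pr_A: O_μ → O_{μ_A} denote the projection onto the A-th coadjoint orbit, and ω_{μ_A} the Kirillov-Kostant-Souriau symplectic form on O_{μ_A} given by ω_{μ_A}(ν)(ξ_{g*}(ν), η_{g*}(ν)) = -ν[ξ,η]. Then the forms ω_μ^A = pr_A* ω_{μ_A} satisfy: ω_μ^A(ν₁,…,ν_k)(ξ_{(g*)^k}, η_{(g*)^k}) = -ν_A[ξ,η], and (ω_μ¹,…,ω_μᵏ) is a k-polysymplectic structure on O_μ, i.e. ⋂_{A=1}^k ker ω_μ^A = 0. -/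

import Mathlib

/-- at a point `ν = (ν₁,…,ν_k)` of the `k`-coadjoint orbit: let `gen` be the
infinitesimal generator map of the `k`-coadjoint action, `gen ξ = ξ_{(𝔤*)^k}(ν)`, i.e.
`gen ξ A η = -ν_A⁅ξ,η⁆` (so the tangent space to the orbit at `ν` is `range gen`). Then
there exist bilinear forms `Ω^A` on the tangent space — the pullbacks `pr_A* ω_{ν_A}` of
the KKS forms — satisfying `Ω^A(ξ_{(𝔤*)^k}(ν), η_{(𝔤*)^k}(ν)) = -ν_A⁅ξ,η⁆`, and they are
polysymplectic: `⋂_{A} ker Ω^A = 0`. -/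
theorem kks_polysymplectic_on_k_coadjoint_orbit
    {𝔤 : Type*} [LieRing 𝔤] [LieAlgebra ℝ 𝔤] [FiniteDimensional ℝ 𝔤]
    {k : ℕ} (ν : Fin k → Module.Dual ℝ 𝔤)
    (gen : 𝔤 →ₗ[ℝ] (Fin k → Module.Dual ℝ 𝔤))
    (hgen : ∀ (ξ η : 𝔤) (A : Fin k), gen ξ A η = -(ν A ⁅ξ, η⁆)) :
    ∃ Ω : Fin k →
        ↥(LinearMap.range gen) →ₗ[ℝ] ↥(LinearMap.range gen) →ₗ[ℝ] ℝ,
      (∀ (A : Fin k) (ξ η : 𝔤),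
        Ω A ⟨gen ξ, LinearMap.mem_range_self gen ξ⟩
            ⟨gen η, LinearMap.mem_range_self gen η⟩ = -(ν A ⁅ξ, η⁆)) ∧
      (∀ v : ↥(LinearMap.range gen), (∀ A w, Ω A v w = 0) → v = 0) := by
  -- key skew-symmetry of the generator pairing
  have skew : ∀ (a b : 𝔤) (A : Fin k), gen a A b = -(gen b A a) := by
    intro a b A
    rw [hgen, hgen, ← lie_skew a b, map_neg, neg_neg]
  -- a linear section of `gen` defined on its range, built from a basis
  classical
  let B := Module.Basis.ofVectorSpace ℝ ↥(LinearMap.range gen)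
  choose preim hpreim using fun i => (B i).2
  let s : ↥(LinearMap.range gen) →ₗ[ℝ] 𝔤 := B.constr ℝ preim
  have hs : gen ∘ₗ s = (LinearMap.range gen).subtype := by
    refine B.ext fun i => ?_
    simp only [LinearMap.comp_apply, Submodule.subtype_apply, s, Module.Basis.constr_basis]
    exact hpreim i
  have hsec : ∀ v : ↥(LinearMap.range gen), gen (s v) = (v : Fin k → Module.Dual ℝ 𝔤) :=
    fun v => congrFun (congrArg DFunLike.coe hs) v
  refine ⟨fun A => LinearMap.mk₂ ℝ
      (fun v w => -((w : Fin k → Module.Dual ℝ 𝔤) A (s v)))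
      (by intro v v' w; simp; ring)
      (by intro c v w; simp)
      (by intro v w w'; simp; ring)
      (by intro c v w; simp), ?_, ?_⟩
  · intro A ξ η
    simp only [LinearMap.mk₂_apply]
    have h1 : gen (s ⟨gen ξ, LinearMap.mem_range_self gen ξ⟩) = gen ξ :=
      hsec ⟨gen ξ, LinearMap.mem_range_self gen ξ⟩
    rw [← skew (s ⟨gen ξ, LinearMap.mem_range_self gen ξ⟩) η A, h1, hgen]
  · intro v hv
    have hz : gen (s v) = 0 := by
      funext A; ext η
      have h0 := hv A ⟨gen η, LinearMap.mem_range_self gen η⟩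
      simp only [LinearMap.mk₂_apply, neg_eq_zero] at h0
      simp only [LinearMap.zero_apply, Pi.zero_apply]
      rw [skew (s v) η A, h0, neg_zero]
    exact Subtype.ext (by rw [← hsec v, hz]; rfl)
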